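/- Let π be a sum-indecomposable pattern of length j ≥ 3, let c_k be the number of π-avoiding ascent sequences of length k and w_k the number of π-avoiding weak ascent sequences of length k. Then c_{k²+2k} ≥ w_k^k for all k ≥ 1. -/

import Mathlib

open Filter Topology

/-- Number of ascents in a sequence (list) of naturals. -/
def asc (s : List ℕ) : ℕ :=
  ((s.zip s.tail).filter (fun p => p.1 < p.2)).length

/-- `s` is an ascent sequence: first entry `0`, and each later entry is at most
one more than the number of ascents of the preceding prefix. -/
def IsAscentSeq (s : List ℕ) : Prop :=
  (0 < s.length → s.getD 0 0 = 0) ∧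
  ∀ i, 0 < i → i < s.length → s.getD i 0 ≤ asc (s.take i) + 1

/-- `s` is a weak ascent sequence: every entry is at most the number of ascents. -/
def IsWeakAscentSeq (s : List ℕ) : Prop :=
  ∀ x ∈ s, x ≤ asc s

/-- `s` contains the pattern `p`: some subsequence of `s` is order-isomorphic
(including equalities) to `p`. -/
def ContainsPattern (s p : List ℕ) : Prop :=
  ∃ idx : Fin p.length → ℕ, StrictMono idx ∧ (∀ a, idx a < s.length) ∧
    ∀ a b : Fin p.length, p.get a < p.get b ↔ s.getD (idx a) 0 < s.getD (idx b) 0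

def AvoidsPattern (s p : List ℕ) : Prop := ¬ ContainsPattern s p

/-- A pattern of length `j` is a permutation of `0,…,j-1`. -/
def IsPattern (p : List ℕ) : Prop := List.Perm p (List.range p.length)

/-- Sum-indecomposable: no proper prefix whose entries are all smaller than
all entries of the complementary suffix. -/
def SumIndecomposable (p : List ℕ) : Prop :=
  ¬ ∃ i, 0 < i ∧ i < p.length ∧ ∀ x ∈ p.take i, ∀ y ∈ p.drop i, x < y

/-- Number of `p`-avoiding ascent sequences of length `k`. -/
noncomputable def ascentAvoidCount (p : List ℕ) (k : ℕ) : ℕ :=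
  {s : List ℕ | s.length = k ∧ IsAscentSeq s ∧ AvoidsPattern s p}.ncard

/-- Number of `p`-avoiding weak ascent sequences of length `k`. -/
noncomputable def weakAvoidCount (p : List ℕ) (k : ℕ) : ℕ :=
  {s : List ℕ | s.length = k ∧ IsWeakAscentSeq s ∧ AvoidsPattern s p}.ncard

def listMax (s : List ℕ) : ℕ := s.foldr max 0
def listMin (s : List ℕ) : ℕ := s.foldr min (listMax s)

/-- Reverse-complement map: `m j = max + min - n (k+1-j)`. -/
def revComp (s : List ℕ) : List ℕ :=
  s.reverse.map (fun x => listMax s + listMin s - x)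

/-- Occurrence of pattern 000: three equal entries. -/
def Contains000 (s : List ℕ) : Prop :=
  ∃ a b c, a < b ∧ b < c ∧ c < s.length ∧
    s.getD a 0 = s.getD b 0 ∧ s.getD b 0 = s.getD c 0

/-- Occurrence of pattern 100: `n i₁ > n i₂ = n i₃`. -/
def Contains100 (s : List ℕ) : Prop :=
  ∃ a b c, a < b ∧ b < c ∧ c < s.length ∧
    s.getD b 0 < s.getD a 0 ∧ s.getD b 0 = s.getD c 0

/-- Occurrence of pattern 110: `n i₁ = n i₂ > n i₃`. -/
def Contains110 (s : List ℕ) : Prop :=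
  ∃ a b c, a < b ∧ b < c ∧ c < s.length ∧
    s.getD a 0 = s.getD b 0 ∧ s.getD c 0 < s.getD b 0

/-- Occurrence of pattern 120: `n i₂ > n i₁ > n i₃`. -/
def Contains120 (s : List ℕ) : Prop :=
  ∃ a b c, a < b ∧ b < c ∧ c < s.length ∧
    s.getD a 0 < s.getD b 0 ∧ s.getD c 0 < s.getD a 0

/-- Occurrence of pattern 201: `n i₁ > n i₃ > n i₂`. -/
def Contains201 (s : List ℕ) : Prop :=
  ∃ a b c, a < b ∧ b < c ∧ c < s.length ∧
    s.getD c 0 < s.getD a 0 ∧ s.getD b 0 < s.getD c 0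

/-- Occurrence of pattern 012: `n i₁ < n i₂ < n i₃`. -/
def Contains012 (s : List ℕ) : Prop :=
  ∃ a b c, a < b ∧ b < c ∧ c < s.length ∧
    s.getD a 0 < s.getD b 0 ∧ s.getD b 0 < s.getD c 0

/-- Occurrence of pattern 011: `n i₁ < n i₂ = n i₃`. -/
def Contains011 (s : List ℕ) : Prop :=
  ∃ a b c, a < b ∧ b < c ∧ c < s.length ∧
    s.getD a 0 < s.getD b 0 ∧ s.getD b 0 = s.getD c 0

/-- Occurrence of pattern 021: `n i₁ < n i₃ < n i₂`. -/
def Contains021 (s : List ℕ) : Prop :=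
  ∃ a b c, a < b ∧ b < c ∧ c < s.length ∧
    s.getD a 0 < s.getD c 0 ∧ s.getD c 0 < s.getD b 0

/-- Occurrence of pattern 102: `n i₂ < n i₁ < n i₃`. -/
def Contains102 (s : List ℕ) : Prop :=
  ∃ a b c, a < b ∧ b < c ∧ c < s.length ∧
    s.getD b 0 < s.getD a 0 ∧ s.getD a 0 < s.getD c 0

/-- The construction `C = 0101⋯01 W̃₁⋯W̃ₖ` from weak ascent sequences. -/
def buildC (k : ℕ) (W : Fin k → List ℕ) : List ℕ :=
  (List.replicate k ([0,1] : List ℕ)).flatten ++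
    (List.ofFn (fun h : Fin k =>
      (W h).map (fun x =>
        x + 1 + ∑ j ∈ Finset.univ.filter (fun j => j < h), listMax (W j)))).flatten

lemma asc_nil : asc [] = 0 := rfl
lemma asc_single (x : ℕ) : asc [x] = 0 := rfl

lemma asc_cons_cons (x y : ℕ) (t : List ℕ) :
    asc (x :: y :: t) = (if x < y then 1 else 0) + asc (y :: t) := by
  simp only [asc, List.zip, List.tail_cons, List.zipWith_cons_cons, List.filter_cons]
  by_cases h : x < y <;> simp [h, List.zip, Nat.add_comm]

lemma asc_le_cons (x : ℕ) (t : List ℕ) : asc t ≤ asc (x :: t) := by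
  cases t with
  | nil => simp [asc_nil, asc_single]
  | cons y t => rw [asc_cons_cons]; omega

lemma asc_append_le (a b : List ℕ) : asc a + asc b ≤ asc (a ++ b) := by
  induction a with
  | nil => simp [asc_nil]
  | cons x t ih =>
    cases t with
    | nil => simpa [asc_single] using asc_le_cons x b
    | cons y t =>
      rw [List.cons_append, List.cons_append, asc_cons_cons, asc_cons_cons,
        ← List.cons_append]
      omega

lemma asc_add_one_le (s : List ℕ) (hs : s ≠ []) : asc s + 1 ≤ s.length := by
  have h1 : ((s.zip s.tail).filter (fun p => p.1 < p.2)).length ≤ (s.zip s.tail).length :=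
    List.length_filter_le _ _
  have h2 : (s.zip s.tail).length = min s.length s.tail.length := List.length_zip
  have h3 : s.tail.length = s.length - 1 := List.length_tail
  have : 0 < s.length := List.length_pos_iff.mpr hs
  simp only [asc]
  omega

lemma asc_take_le (s : List ℕ) (i : ℕ) : asc (s.take i) ≤ i := by
  rcases Nat.eq_or_lt_of_le (Nat.zero_le (s.take i).length) with h | h
  · have : s.take i = [] := List.length_eq_zero_iff.mp h.symm
    simp [this, asc_nil]
  · have := asc_add_one_le (s.take i) (by intro h'; simp [h'] at h)
    have : (s.take i).length ≤ i := by simp [List.length_take]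
    omega

lemma asc_map_add (c : ℕ) (s : List ℕ) : asc (s.map (· + c)) = asc s := by
  induction s with
  | nil => rfl
  | cons x t ih =>
    cases t with
    | nil => rfl
    | cons y t =>
      simp only [List.map_cons] at ih ⊢
      rw [asc_cons_cons, asc_cons_cons, ih]
      congr 1
      simp [Nat.add_lt_add_iff_right]

lemma le_listMax {x : ℕ} {s : List ℕ} (h : x ∈ s) : x ≤ listMax s := by
  induction s with
  | nil => simp at h
  | cons y t ih =>
    rcases List.mem_cons.mp h with rfl | h
    · exact le_max_left _ _
    · exact le_trans (ih h) (le_max_right _ _)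

lemma listMax_le {B : ℕ} {s : List ℕ} (h : ∀ x ∈ s, x ≤ B) : listMax s ≤ B := by
  induction s with
  | nil => exact Nat.zero_le _
  | cons y t ih =>
    simp only [listMax, List.foldr_cons]
    exact max_le (h y (by simp)) (ih (fun x hx => h x (by simp [hx])))

/-- shift-and-concatenate blocks -/
def shiftBlocks : ℕ → List (List ℕ) → List ℕ
  | _, [] => []
  | c, w :: ws => w.map (· + c) ++ shiftBlocks (c + listMax w) ws

lemma shiftBlocks_length (c : ℕ) (ws : List (List ℕ)) :
    (shiftBlocks c ws).length = (ws.map List.length).sum := by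
  induction ws generalizing c with
  | nil => rfl
  | cons w t ih => simp [shiftBlocks, ih]

lemma shiftBlocks_le_mem {c : ℕ} {ws : List (List ℕ)} {y : ℕ} (h : y ∈ shiftBlocks c ws) :
    c ≤ y := by
  induction ws generalizing c with
  | nil => simp [shiftBlocks] at h
  | cons w t ih =>
    rcases List.mem_append.mp h with h | h
    · obtain ⟨x, _, rfl⟩ := List.mem_map.mp h
      omega
    · have := ih h
      omega

lemma getD_mem {s : List ℕ} {i : ℕ} (h : i < s.length) : s.getD i 0 ∈ s := by
  rw [List.getD_eq_getElem _ _ h]; exact List.getElem_mem _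

/-- Key positional bound for the ascent-sequence property in the blocks part. -/
lemma ascseq_shift (ws : List (List ℕ)) (u : List ℕ) (c : ℕ)
    (h1 : ∀ w ∈ ws, listMax w ≤ asc w)
    (h2 : ∀ w ∈ ws, listMax w + c ≤ asc u + 1) :
    ∀ i, u.length ≤ i → i < (u ++ shiftBlocks c ws).length →
      (u ++ shiftBlocks c ws).getD i 0 ≤ asc ((u ++ shiftBlocks c ws).take i) + 1 := by
  induction ws generalizing u c with
  | nil => intro i hi hlen; simp [shiftBlocks] at hlen; omega
  | cons w t ih =>
    intro i hi hlen
    have hsb : shiftBlocks c (w :: t) = w.map (· + c) ++ shiftBlocks (c + listMax w) t := rfl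
    set u' : List ℕ := u ++ w.map (· + c) with hu'
    have hassoc : u ++ shiftBlocks c (w :: t) = u' ++ shiftBlocks (c + listMax w) t := by
      rw [hsb, hu', List.append_assoc]
    by_cases hcase : i < u'.length
    · -- inside block w
      rw [hassoc] at hlen ⊢
      have hlt : i < u'.length := hcase
      rw [List.getD_append _ _ _ _ hlt]
      have hm : u.length ≤ i := hi
      have hiu : i - u.length < (w.map (· + c)).length := by
        simp only [hu', List.length_append] at hlt; omega
      have hval : u'.getD i 0 = w.getD (i - u.length) 0 + c := by
        rw [hu', List.getD_append_right _ _ _ _ hm]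
        have hw : i - u.length < w.length := by simpa using hiu
        rw [List.getD_eq_getElem _ _ hiu, List.getElem_map, List.getD_eq_getElem _ _ hw]
      rw [hval]
      have hwmem : w.getD (i - u.length) 0 ∈ w := getD_mem (by simpa using hiu)
      have hb : w.getD (i - u.length) 0 + c ≤ asc u + 1 :=
        le_trans (by have := le_listMax hwmem; omega) (h2 w (by simp))
      have htake : asc u ≤ asc ((u' ++ shiftBlocks (c + listMax w) t).take i) := by
        have : (u' ++ shiftBlocks (c + listMax w) t).take i
            = u ++ ((w.map (· + c) ++ shiftBlocks (c + listMax w) t).take (i - u.length)) := by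
          rw [← hassoc, hsb, List.take_append,
            List.take_of_length_le (by omega)]
        rw [this]
        have := asc_append_le u ((w.map (· + c) ++ shiftBlocks (c + listMax w) t).take (i - u.length))
        omega
      omega
    · -- in later blocks: apply IH with u := u'
      rw [hassoc] at hlen ⊢
      refine ih u' (c + listMax w) (fun w' hw' => h1 w' (by simp [hw'])) ?_ i (by omega) hlen
      intro w' hw'
      have hA : listMax w' + c ≤ asc u + 1 := h2 w' (by simp [hw'])
      have hB : asc u + asc w ≤ asc u' := by
        have := asc_append_le u (w.map (· + c))
        rw [asc_map_add] at this
        exact this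
      have := h1 w (by simp)
      omega

lemma contains_map_add {w : List ℕ} {p : List ℕ} {c : ℕ}
    (h : ContainsPattern (w.map (· + c)) p) : ContainsPattern w p := by
  obtain ⟨idx, hmono, hlt, hiso⟩ := h
  refine ⟨idx, hmono, fun a => by simpa using hlt a, fun a b => ?_⟩
  rw [hiso a b]
  have hg : ∀ a, (w.map (· + c)).getD (idx a) 0 = w.getD (idx a) 0 + c := by
    intro a
    have h1 : idx a < (w.map (· + c)).length := hlt a
    have h2 : idx a < w.length := by simpa using h1
    rw [List.getD_eq_getElem _ _ h1, List.getElem_map, List.getD_eq_getElem _ _ h2]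
  rw [hg a, hg b]
  omega

/-- Straddle argument: concatenation of avoiders with non-decreasing values avoids
a sum-indecomposable nodup pattern. -/
lemma avoid_append {p u v : List ℕ} (hnd : p.Nodup) (hsi : SumIndecomposable p)
    (hu : AvoidsPattern u p) (hv : AvoidsPattern v p)
    (hle : ∀ x ∈ u, ∀ y ∈ v, x ≤ y) : AvoidsPattern (u ++ v) p := by
  rintro ⟨idx, hmono, hlt, hiso⟩
  by_cases hall : ∀ a, idx a < u.length
  · exact hu ⟨idx, hmono, hall, fun a b => by
      rw [hiso a b, List.getD_append _ _ _ _ (hall a), List.getD_append _ _ _ _ (hall b)]⟩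
  by_cases hnone : ∀ a, u.length ≤ idx a
  · refine hv ⟨fun a => idx a - u.length, fun a b hab => ?_, fun a => ?_, fun a b => ?_⟩
    · have h1 := hmono hab; have h2 := hnone a; have h3 := hnone b
      show idx a - u.length < idx b - u.length
      omega
    · have h1 := hlt a; have h2 := hnone a
      simp only [List.length_append] at h1
      show idx a - u.length < v.length
      omega
    · rw [hiso a b, List.getD_append_right _ _ _ _ (hnone a),
        List.getD_append_right _ _ _ _ (hnone b)]
  -- straddle
  push_neg at hall hnone
  obtain ⟨b0, hb0⟩ := hall
  obtain ⟨a0, ha0⟩ := hnone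
  set t := (Finset.univ.filter (fun a : Fin p.length => idx a < u.length)).card with ht
  have hmem_iff : ∀ a : Fin p.length, a.val < t ↔ idx a < u.length := by
    intro a
    constructor
    · intro h
      by_contra hcon
      push_neg at hcon
      have hsub : Finset.univ.filter (fun b : Fin p.length => idx b < u.length)
          ⊆ Finset.Iio a := by
        intro b hb
        simp only [Finset.mem_filter, Finset.mem_univ, true_and] at hb
        have : idx b < idx a := lt_of_lt_of_le hb hcon
        exact Finset.mem_Iio.mpr (hmono.lt_iff_lt.mp this)
      have := Finset.card_le_card hsub
      rw [Fin.card_Iio] at this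
      omega
    · intro h
      have hsub : Finset.Iic a ⊆
          Finset.univ.filter (fun b : Fin p.length => idx b < u.length) := by
        intro b hb
        simp only [Finset.mem_filter, Finset.mem_univ, true_and]
        rcases Finset.mem_Iic.mp hb |>.lt_or_eq with hba | rfl
        · exact lt_of_lt_of_le (hmono hba) (le_of_lt h)
        · exact h
      have := Finset.card_le_card hsub
      rw [Fin.card_Iic] at this
      omega
  have ht_pos : 0 < t := by have := (hmem_iff a0).mpr ha0; omega
  have ht_lt : t < p.length := by
    have h2 : ¬ ((b0 : ℕ) < t) := (hmem_iff b0).not.mpr (by omega)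
    have hb0lt := b0.isLt
    omega
  refine hsi ⟨t, ht_pos, ht_lt, ?_⟩
  intro x hx y hy
  obtain ⟨i, hi, hxi⟩ := List.mem_iff_getElem.mp hx
  obtain ⟨j, hj, hyj⟩ := List.mem_iff_getElem.mp hy
  have hil : i < p.length := by
    have := (p.take t).length; simp [List.length_take] at hi; omega
  have hjl : t + j < p.length := by simp [List.length_drop] at hj; omega
  have hxi' : x = p.get ⟨i, hil⟩ := by
    rw [← hxi]; simp [List.getElem_take]
  have hyj' : y = p.get ⟨t + j, hjl⟩ := by
    rw [← hyj]; simp [List.getElem_drop]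
  set a : Fin p.length := ⟨i, hil⟩
  set b : Fin p.length := ⟨t + j, hjl⟩
  have hit : i < t := by simp [List.length_take] at hi; omega
  have hau : idx a < u.length := (hmem_iff a).mp hit
  have hbu : u.length ≤ idx b := by
    have h1 : ¬ ((b : ℕ) < t) := by simp only [b]; omega
    have h2 := (hmem_iff b).not.mp h1
    omega
  -- values
  have hva : (u ++ v).getD (idx a) 0 ∈ u := by
    rw [List.getD_append _ _ _ _ hau, List.getD_eq_getElem _ _ hau]
    exact List.getElem_mem _
  have hvb : (u ++ v).getD (idx b) 0 ∈ v := by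
    have hblt : idx b - u.length < v.length := by
      have := hlt b; simp only [List.length_append] at this; omega
    rw [List.getD_append_right _ _ _ _ hbu, List.getD_eq_getElem _ _ hblt]
    exact List.getElem_mem _
  have hvle : (u ++ v).getD (idx a) 0 ≤ (u ++ v).getD (idx b) 0 := hle _ hva _ hvb
  have hab : a ≠ b := by
    intro h
    have : (a : ℕ) = b := congrArg Fin.val h
    simp only [a, b] at this
    omega
  have hget : p.get a ≠ p.get b := fun h => hab (List.nodup_iff_injective_get.mp hnd h)
  rw [hxi', hyj']
  rcases lt_or_gt_of_ne hget with h | h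
  · exact h
  · exfalso
    have := (hiso b a).mp h
    omega

lemma avoid_shiftBlocks {p : List ℕ} (hp0 : 0 < p.length) (hnd : p.Nodup)
    (hsi : SumIndecomposable p)
    (ws : List (List ℕ)) (c : ℕ) (h : ∀ w ∈ ws, AvoidsPattern w p) :
    AvoidsPattern (shiftBlocks c ws) p := by
  induction ws generalizing c with
  | nil =>
    rintro ⟨idx, hmono, hlt, hiso⟩
    exact absurd (hlt ⟨0, hp0⟩) (by simp [shiftBlocks])
  | cons w t ih =>
    show AvoidsPattern (w.map (· + c) ++ shiftBlocks (c + listMax w) t) p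
    refine avoid_append hnd hsi ?_ (ih _ (fun w' hw' => h w' (by simp [hw']))) ?_
    · exact fun hc => h w (by simp) (contains_map_add hc)
    · intro x hx y hy
      obtain ⟨x', hx', rfl⟩ := List.mem_map.mp hx
      have h1 := le_listMax hx'
      have h2 := shiftBlocks_le_mem hy
      omega

/-- A list with all entries ≤ 1 avoids any pattern that is a permutation with ≥ 3 entries. -/
lemma avoid_small {p s : List ℕ} (hp : IsPattern p) (hp3 : 3 ≤ p.length)
    (hs : ∀ x ∈ s, x ≤ 1) : AvoidsPattern s p := by
  rintro ⟨idx, hmono, hlt, hiso⟩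
  have hperm : List.Perm p (List.range p.length) := hp
  have hmem : ∀ m, m < p.length → m ∈ p := fun m hm =>
    (hperm.mem_iff).mpr (List.mem_range.mpr hm)
  obtain ⟨i0, hi0, h0⟩ := List.mem_iff_getElem.mp (hmem 0 (by omega))
  obtain ⟨i1, hi1, h1⟩ := List.mem_iff_getElem.mp (hmem 1 (by omega))
  obtain ⟨i2, hi2, h2⟩ := List.mem_iff_getElem.mp (hmem 2 (by omega))
  have v01 : s.getD (idx ⟨i0, hi0⟩) 0 < s.getD (idx ⟨i1, hi1⟩) 0 := by
    refine (hiso _ _).mp ?_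
    simp only [List.get_eq_getElem, h0, h1]
    omega
  have v12 : s.getD (idx ⟨i1, hi1⟩) 0 < s.getD (idx ⟨i2, hi2⟩) 0 := by
    refine (hiso _ _).mp ?_
    simp only [List.get_eq_getElem, h1, h2]
    omega
  have hm2 : s.getD (idx ⟨i2, hi2⟩) 0 ≤ 1 := by
    refine hs _ ?_
    have := hlt ⟨i2, hi2⟩
    rw [List.getD_eq_getElem _ _ this]
    exact List.getElem_mem _
  omega

lemma sum_filter_lt_succ {k : ℕ} (f : Fin (k + 1) → ℕ) (h : Fin k) :
    ∑ j ∈ Finset.univ.filter (fun j => j < Fin.succ h), f j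
      = f 0 + ∑ j ∈ Finset.univ.filter (fun j => j < h), f (Fin.succ j) := by
  rw [Finset.sum_filter, Finset.sum_filter, Fin.sum_univ_succ]
  congr 1
  · simp [Fin.succ_pos]

lemma sum_filter_lt_zero {k : ℕ} (f : Fin (k + 1) → ℕ) :
    ∑ j ∈ Finset.univ.filter (fun j => j < (0 : Fin (k + 1))), f j = 0 := by
  rw [Finset.sum_filter]
  refine Finset.sum_eq_zero (fun j _ => ?_)
  simp [Fin.not_lt_zero]

lemma ofFn_join_eq_shiftBlocks (k : ℕ) (W : Fin k → List ℕ) (c : ℕ) :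
    (List.ofFn (fun h : Fin k =>
      (W h).map (fun x =>
        x + c + ∑ j ∈ Finset.univ.filter (fun j => j < h), listMax (W j)))).flatten
      = shiftBlocks c (List.ofFn W) := by
  induction k generalizing c with
  | zero => simp [shiftBlocks]
  | succ k ih =>
    rw [List.ofFn_succ, List.ofFn_succ (f := W)]
    show (_ :: _).flatten = _
    rw [List.flatten_cons]
    show _ ++ _ = shiftBlocks c (W 0 :: List.ofFn fun i => W (Fin.succ i))
    rw [show shiftBlocks c (W 0 :: List.ofFn fun i => W (Fin.succ i))
        = (W 0).map (· + c) ++ shiftBlocks (c + listMax (W 0)) (List.ofFn fun i => W (Fin.succ i)) from rfl]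
    congr 1
    · rw [sum_filter_lt_zero]
      simp [Nat.add_comm]
    · rw [← ih (fun i => W (Fin.succ i)) (c + listMax (W 0))]
      show List.flatten _ = List.flatten _
      refine congrArg List.flatten (congrArg List.ofFn (funext fun h => ?_))
      refine congrArg (fun f => List.map f (W (Fin.succ h))) (funext fun x => ?_)
      rw [sum_filter_lt_succ]
      ring
lemma buildC_eq (k : ℕ) (W : Fin k → List ℕ) :
    buildC k W = (List.replicate k ([0,1] : List ℕ)).flatten ++ shiftBlocks 1 (List.ofFn W) := by
  rw [buildC, ofFn_join_eq_shiftBlocks]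

def prefixP (k : ℕ) : List ℕ := (List.replicate k ([0,1] : List ℕ)).flatten

lemma prefixP_succ (k : ℕ) : prefixP (k + 1) = 0 :: 1 :: prefixP k := by
  show (List.replicate (k+1) ([0,1] : List ℕ)).flatten = _
  rw [List.replicate_succ, List.flatten_cons]
  rfl

lemma prefixP_length (k : ℕ) : (prefixP k).length = 2 * k := by
  induction k with
  | zero => rfl
  | succ k ih => rw [prefixP_succ]; simp [ih]; omega

lemma prefixP_mem {k x : ℕ} (h : x ∈ prefixP k) : x ≤ 1 := by
  induction k with
  | zero => simp [prefixP, List.flatten] at h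
  | succ k ih =>
    rw [prefixP_succ] at h
    rcases List.mem_cons.mp h with rfl | h
    · omega
    rcases List.mem_cons.mp h with rfl | h
    · omega
    exact ih h

lemma k_le_asc_prefixP (k : ℕ) : k ≤ asc (prefixP k) := by
  induction k with
  | zero => omega
  | succ k ih =>
    rw [prefixP_succ, asc_cons_cons]
    have := asc_le_cons 1 (prefixP k)
    simp only [if_pos (by omega : (0:ℕ) < 1)]
    omega

lemma prefixP_getD_zero (k : ℕ) (hk : 1 ≤ k) : (prefixP k).getD 0 0 = 0 := by
  obtain ⟨k, rfl⟩ := Nat.exists_eq_add_of_le hk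
  rw [Nat.add_comm, prefixP_succ]
  rfl

lemma shiftBlocks_injective {m : ℕ} : ∀ (ws ws' : List (List ℕ)) (c : ℕ),
    ws.length = ws'.length → (∀ w ∈ ws, w.length = m) → (∀ w ∈ ws', w.length = m) →
    shiftBlocks c ws = shiftBlocks c ws' → ws = ws' := by
  intro ws
  induction ws with
  | nil => intro ws' c hl _ _ _; exact (List.length_eq_zero_iff.mp hl.symm).symm ▸ rfl
  | cons w t ih =>
    intro ws' c hl hw hw' heq
    cases ws' with
    | nil => simp at hl
    | cons w' t' =>
      have heq' : w.map (· + c) ++ shiftBlocks (c + listMax w) t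
          = w'.map (· + c) ++ shiftBlocks (c + listMax w') t' := heq
      have hlen : (w.map (· + c)).length = (w'.map (· + c)).length := by
        simp [hw w (by simp), hw' w' (by simp)]
      obtain ⟨h1, h2⟩ := List.append_inj heq' hlen
      have hww : w = w' :=
        List.map_injective_iff.mpr (add_left_injective c) h1
      subst hww
      have := ih t' (c + listMax w) (by simpa using hl)
        (fun x hx => hw x (by simp [hx])) (fun x hx => hw' x (by simp [hx])) h2
      rw [this]

lemma bounded_lists_finite (n B : ℕ) :
    {s : List ℕ | s.length = n ∧ ∀ x ∈ s, x ≤ B}.Finite := by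
  have hinj : Set.InjOn (fun s : List ℕ => fun i : Fin n => (⟨min (s.getD i 0) B, by omega⟩ : Fin (B+1)))
      {s : List ℕ | s.length = n ∧ ∀ x ∈ s, x ≤ B} := by
    rintro s ⟨hs, hsB⟩ s' ⟨hs', hsB'⟩ h
    refine List.ext_getElem (hs.trans hs'.symm) (fun i h1 h2 => ?_)
    have hi : i < n := by omega
    have := congrFun h ⟨i, hi⟩
    simp only [Fin.mk.injEq] at this
    have e1 : s.getD i 0 = s[i] := List.getD_eq_getElem _ _ h1
    have e2 : s'.getD i 0 = s'[i] := List.getD_eq_getElem _ _ h2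
    have b1 : s[i] ≤ B := hsB _ (List.getElem_mem _)
    have b2 : s'[i] ≤ B := hsB' _ (List.getElem_mem _)
    rw [e1, e2] at this
    omega
  exact Set.Finite.of_finite_image (Set.toFinite _) hinj

/-- `c_{k²+2k} ≥ w_k ^ k`. -/
theorem stmt3 (p : List ℕ) (hp : IsPattern p) (hp3 : 3 ≤ p.length)
    (hsi : SumIndecomposable p) (k : ℕ) (hk : 1 ≤ k) :
    weakAvoidCount p k ^ k ≤ ascentAvoidCount p (k ^ 2 + 2 * k) := by
  classical
  have hnd : p.Nodup := (List.Perm.nodup_iff hp).mpr (List.nodup_range)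
  set A : Set (List ℕ) := {s : List ℕ | s.length = k ∧ IsWeakAscentSeq s ∧ AvoidsPattern s p}
    with hA_def
  set n : ℕ := k ^ 2 + 2 * k with hn
  set B : Set (List ℕ) := {s : List ℕ | s.length = n ∧ IsAscentSeq s ∧ AvoidsPattern s p}
    with hB_def
  -- finiteness
  have hAfin : A.Finite := by
    refine (bounded_lists_finite k k).subset ?_
    rintro s ⟨hl, hw, _⟩
    exact ⟨hl, fun x hx => le_trans (hw x hx) (by
      have := asc_add_one_le s (by rintro rfl; simp at hl; omega)
      omega)⟩
  have hBfin : B.Finite := by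
    refine (bounded_lists_finite n n).subset ?_
    rintro s ⟨hl, ha, _⟩
    refine ⟨hl, fun x hx => ?_⟩
    obtain ⟨i, hi, rfl⟩ := List.mem_iff_getElem.mp hx
    rcases Nat.eq_zero_or_pos i with rfl | hpos
    · have := ha.1 (by omega)
      rw [List.getD_eq_getElem _ _ hi] at this
      omega
    · have := ha.2 i hpos (by omega)
      rw [List.getD_eq_getElem _ _ hi] at this
      have h2 := asc_take_le s i
      omega
  have hAsub : Finite ↥A := hAfin.to_subtype
  have hBsub : Finite ↥B := hBfin.to_subtype
  -- the map
  have hmem : ∀ W : Fin k → List ℕ, (∀ h, W h ∈ A) → buildC k W ∈ B := by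
    intro W hW
    have hlenW : ∀ h, (W h).length = k := fun h => (hW h).1
    have hweak : ∀ h, IsWeakAscentSeq (W h) := fun h => (hW h).2.1
    have havoid : ∀ h, AvoidsPattern (W h) p := fun h => (hW h).2.2
    have hmax_asc : ∀ w ∈ List.ofFn W, listMax w ≤ asc w := by
      intro w hw
      obtain ⟨h, rfl⟩ := List.mem_ofFn.mp hw
      exact listMax_le (hweak h)
    have hmax_lt : ∀ w ∈ List.ofFn W, listMax w + 1 ≤ asc (prefixP k) + 1 := by
      intro w hw
      obtain ⟨h, rfl⟩ := List.mem_ofFn.mp hw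
      have h1 : listMax (W h) ≤ asc (W h) := listMax_le (hweak h)
      have h2 : asc (W h) + 1 ≤ k := by
        have hne : W h ≠ [] := by
          intro h0; have := hlenW h; rw [h0] at this; simp at this; omega
        have := asc_add_one_le (W h) hne
        rw [hlenW h] at this; exact this
      have h3 := k_le_asc_prefixP k
      omega
    have hCeq : buildC k W = prefixP k ++ shiftBlocks 1 (List.ofFn W) := buildC_eq k W
    have hClen : (buildC k W).length = n := by
      rw [hCeq, List.length_append, prefixP_length, shiftBlocks_length]
      have : (List.ofFn W).map List.length = List.replicate k k := by
        rw [List.map_ofFn]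
        have : (List.length ∘ W) = fun _ => k := funext fun h => hlenW h
        rw [this, List.ofFn_const]
      rw [this, List.sum_replicate, smul_eq_mul, hn]
      have : k ^ 2 = k * k := sq k
      omega
    refine ⟨hClen, ⟨?_, ?_⟩, ?_⟩
    · -- first entry 0
      intro hpos
      rw [hCeq, List.getD_append _ _ _ _ (by rw [prefixP_length]; omega)]
      exact prefixP_getD_zero k hk
    · -- ascent condition
      intro i hipos hilt
      rw [hCeq] at hilt ⊢
      by_cases hsmall : i < (prefixP k).length
      · rw [List.getD_append _ _ _ _ hsmall]
        have : (prefixP k).getD i 0 ≤ 1 := prefixP_mem (getD_mem hsmall)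
        omega
      · push_neg at hsmall
        exact ascseq_shift (List.ofFn W) (prefixP k) 1 hmax_asc hmax_lt i hsmall hilt
    · -- avoidance
      rw [hCeq]
      refine avoid_append hnd hsi (avoid_small hp hp3 (fun x hx => prefixP_mem hx)) ?_ ?_
      · refine avoid_shiftBlocks (by omega) hnd hsi _ _ ?_
        intro w hw
        obtain ⟨h, rfl⟩ := List.mem_ofFn.mp hw
        exact havoid h
      · intro x hx y hy
        exact le_trans (prefixP_mem hx) (shiftBlocks_le_mem hy)
  -- injectivity
  let Φ : (Fin k → ↥A) → ↥B := fun W => ⟨buildC k (fun h => (W h : List ℕ)),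
    hmem _ (fun h => (W h).2)⟩
  have hΦinj : Function.Injective Φ := by
    intro W W' hWW
    have heq : buildC k (fun h => (W h : List ℕ)) = buildC k (fun h => (W' h : List ℕ)) :=
      congrArg Subtype.val hWW
    rw [buildC_eq, buildC_eq] at heq
    have heq2 := List.append_cancel_left heq
    have hofn : List.ofFn (fun h => (W h : List ℕ)) = List.ofFn (fun h => (W' h : List ℕ)) := by
      refine shiftBlocks_injective (m := k) _ _ 1 (by simp) ?_ ?_ heq2
      · intro w hw
        obtain ⟨h, rfl⟩ := List.mem_ofFn.mp hw
        exact (W h).2.1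
      · intro w hw
        obtain ⟨h, rfl⟩ := List.mem_ofFn.mp hw
        exact (W' h).2.1
    have := List.ofFn_injective hofn
    funext h
    exact Subtype.ext (congrFun this h)
  -- counting
  have h1 : weakAvoidCount p k = Nat.card ↥A := (Nat.card_coe_set_eq A).symm
  have h2 : ascentAvoidCount p n = Nat.card ↥B := (Nat.card_coe_set_eq B).symm
  have h3 : Nat.card (Fin k → ↥A) = Nat.card ↥A ^ k := by
    have hfk : Nat.card (Fin k) = k := by simp
    rw [Nat.card_fun, hfk]
  have h4 : Nat.card (Fin k → ↥A) ≤ Nat.card ↥B := Nat.card_le_card_of_injective Φ hΦinj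
  show weakAvoidCount p k ^ k ≤ ascentAvoidCount p n
  rw [h1, h2, ← h3]
  exact h4
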